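/- Let f : X → ℝ be a filter on a Lefschetz complex with n = |BD(f)|, let Α order BD(f) by strictly decreasing birth value and Ω order BD(f) by strictly increasing death value, and let φ, ψ ∈ BD(f) be distinct pairs. (i) If φ = Α(i+1) and the boundary map ∂'_i of the quotient obtained by canceling Α(1),…,Α(i) satisfies ∂'_i(b_φ, d_ψ) = 1, then (φ, ψ) ∈ Depth(f). (ii) If φ = Ω(j+1) and the boundary map ∂''_j of the quotient obtained by canceling Ω(1),…,Ω(j) satisfies ∂''_j(b_ψ, d_φ) = 1, then (φ, ψ) ∈ Depth(f). -/

import Mathlib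

attribute [local instance] Classical.propDecidable

/-- A Lefschetz complex over an ambient finite type `C` of potential cells:
a finite set `cells` of cells, a dimension function, and a mod-2 incidence
function `bd` supported on `cells`, with `bd x y ≠ 0` only if
`dim y = dim x + 1`, and `∂∘∂ = 0` mod 2. -/
structure LC (C : Type) [Fintype C] [DecidableEq C] : Type where
  cells : Finset C
  dim : C → ℤ
  bd : C → C → ZMod 2
  bd_mem : ∀ x y, bd x y ≠ 0 → x ∈ cells ∧ y ∈ cells
  bd_dim : ∀ x y, bd x y ≠ 0 → dim y = dim x + 1
  bd_sq : ∀ x z, ∑ y, bd x y * bd y z = 0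

variable {C : Type} [Fintype C] [DecidableEq C]

/-- A filter on a Lefschetz complex: injective on the cells, and increasing
along the facet relation. -/
def IsFilter (L : LC C) (f : C → ℝ) : Prop :=
  (∀ x ∈ L.cells, ∀ y ∈ L.cells, f x = f y → x = y) ∧
  ∀ x y, L.bd x y ≠ 0 → f x < f y

lemma LC.bd_self (L : LC C) (a : C) : L.bd a a = 0 := by
  by_contra h
  have := L.bd_dim a a h
  omega

/-- The boundary map of the quotient after canceling `(s,t)`:
`∂'(x,y) = ∂(x,y) + ∂(s,y)·∂(x,t)` on the remaining cells, `0` elsewhere. -/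
def cancelBd (L : LC C) (s t : C) : C → C → ZMod 2 := fun x y =>
  if x ∈ L.cells \ {s, t} ∧ y ∈ L.cells \ {s, t} then
    L.bd x y + L.bd s y * L.bd x t
  else 0

private lemma zmod2_add_self : ∀ a : ZMod 2, a + a = 0 := by decide

/-- The quotient Lefschetz complex after canceling the facet-cofacet pair `(s,t)`. -/
noncomputable def cancel (L : LC C) (s t : C) : LC C :=
  if hst : L.bd s t = 1 then
    { cells := L.cells \ {s, t}
      dim := L.dim
      bd := cancelBd L s t
      bd_mem := by
        intro x y h
        unfold cancelBd at h
        split_ifs at h with hc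
        · exact hc
        · exact absurd rfl h
      bd_dim := by
        intro x y h
        unfold cancelBd at h
        split_ifs at h with hc
        · by_cases hxy : L.bd x y = 0
          · rw [hxy, zero_add] at h
            have h1 : L.bd s y ≠ 0 := fun hz => by simp [hz] at h
            have h2 : L.bd x t ≠ 0 := fun hz => by simp [hz] at h
            have d1 := L.bd_dim s y h1
            have d2 := L.bd_dim x t h2
            have d3 := L.bd_dim s t (by simp [hst])
            omega
          · exact L.bd_dim x y hxy
        · exact absurd rfl h
      bd_sq := by
        intro x z
        by_cases hx : x ∈ L.cells \ {s, t}
        swap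
        · refine Finset.sum_eq_zero fun y _ => ?_
          unfold cancelBd
          rw [if_neg (fun hc => hx hc.1), zero_mul]
        by_cases hz : z ∈ L.cells \ {s, t}
        swap
        · refine Finset.sum_eq_zero fun y _ => ?_
          have h0 : cancelBd L s t y z = 0 := by
            unfold cancelBd; rw [if_neg (fun hc => hz hc.2)]
          rw [h0, mul_zero]
        have key : ∀ y, cancelBd L s t x y * cancelBd L s t y z =
            (L.bd x y + L.bd s y * L.bd x t) * (L.bd y z + L.bd s z * L.bd y t) := by
          intro y
          by_cases hy : y ∈ L.cells \ {s, t}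
          · unfold cancelBd
            rw [if_pos ⟨hx, hy⟩, if_pos ⟨hy, hz⟩]
          · have lhs0 : cancelBd L s t x y = 0 := by
              unfold cancelBd; rw [if_neg (fun hc => hy hc.2)]
            rw [lhs0, zero_mul]
            by_cases hyc : y ∈ L.cells
            · have hyst : y = s ∨ y = t := by
                simp only [Finset.mem_sdiff, Finset.mem_insert, Finset.mem_singleton] at hy
                tauto
              rcases hyst with rfl | rfl
              · simp [L.bd_self, hst, zmod2_add_self]
              · simp [L.bd_self, hst, zmod2_add_self]
            · have b1 : L.bd x y = 0 := by
                by_contra hb; exact hyc (L.bd_mem x y hb).2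
              have b2 : L.bd s y = 0 := by
                by_contra hb; exact hyc (L.bd_mem s y hb).2
              have b3 : L.bd y z = 0 := by
                by_contra hb; exact hyc (L.bd_mem y z hb).1
              have b4 : L.bd y t = 0 := by
                by_contra hb; exact hyc (L.bd_mem y t hb).1
              rw [b1, b2, b3, b4]
              ring
        rw [Finset.sum_congr rfl fun y _ => key y]
        have expand : ∀ y : C,
            (L.bd x y + L.bd s y * L.bd x t) * (L.bd y z + L.bd s z * L.bd y t) =
            L.bd x y * L.bd y z + L.bd s z * (L.bd x y * L.bd y t)
              + L.bd x t * (L.bd s y * L.bd y z)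
              + L.bd x t * L.bd s z * (L.bd s y * L.bd y t) := by
          intro y; ring
        rw [Finset.sum_congr rfl fun y _ => expand y]
        simp only [Finset.sum_add_distrib, ← Finset.mul_sum, L.bd_sq, mul_zero,
          add_zero, zero_add] }
  else L

/-- The boundary operator on mod-2 chains. -/
noncomputable def bdOp (L : LC C) : (C → ZMod 2) →ₗ[ZMod 2] (C → ZMod 2) where
  toFun c := fun x => ∑ y, L.bd x y * c y
  map_add' a b := by
    funext x
    simp [mul_add, Finset.sum_add_distrib]
  map_smul' m a := by
    funext x
    simp only [Pi.smul_apply, smul_eq_mul, RingHom.id_apply]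
    rw [Finset.mul_sum]
    exact Finset.sum_congr rfl fun y _ => by ring

/-- The `p`-chains of a Lefschetz complex: mod-2 chains supported on cells of
dimension `p`. -/
def chains (L : LC C) (p : ℤ) : Submodule (ZMod 2) (C → ZMod 2) where
  carrier := {c | ∀ x, c x ≠ 0 → x ∈ L.cells ∧ L.dim x = p}
  zero_mem' := by intro x hx; simp at hx
  add_mem' := by
    intro a b ha hb x hx
    by_cases h1 : a x = 0
    · refine hb x fun h2 => hx ?_
      show a x + b x = 0
      rw [h1, h2, add_zero]
    · exact ha x h1
  smul_mem' := by
    intro m c hc x hx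
    refine hc x fun h0 => hx ?_
    show m * c x = 0
    rw [h0, mul_zero]

/-- The `p`-cycles. -/
noncomputable def cycles (L : LC C) (p : ℤ) : Submodule (ZMod 2) (C → ZMod 2) :=
  chains L p ⊓ LinearMap.ker (bdOp L)

/-- The `p`-boundaries. -/
noncomputable def boundaries (L : LC C) (p : ℤ) : Submodule (ZMod 2) (C → ZMod 2) :=
  Submodule.map (bdOp L) (chains L (p + 1))

/-- The mod-2 homology of a Lefschetz complex in dimension `p`. -/
noncomputable def homology (L : LC C) (p : ℤ) : Type :=
  cycles L p ⧸ (Submodule.comap (cycles L p).subtype (boundaries L p))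

noncomputable instance (L : LC C) (p : ℤ) : AddCommGroup (homology L p) :=
  inferInstanceAs (AddCommGroup (cycles L p ⧸
    Submodule.comap (cycles L p).subtype (boundaries L p)))

noncomputable instance (L : LC C) (p : ℤ) : Module (ZMod 2) (homology L p) :=
  inferInstanceAs (Module (ZMod 2) (cycles L p ⧸
    Submodule.comap (cycles L p).subtype (boundaries L p)))

/-- The boundary of the cell `y`, as a chain. -/
def col (L : LC C) (y : C) : C → ZMod 2 := fun x => L.bd x y

/-- The chain `v` is the boundary of a chain supported on cells with filter
value `< b`. -/
def IsBdryBelow (L : LC C) (f : C → ℝ) (b : ℝ) (v : C → ZMod 2) : Prop :=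
  ∃ c : C → ZMod 2, (∀ z, c z ≠ 0 → z ∈ L.cells ∧ f z < b) ∧ bdOp L c = v

/-- The cell `y` gives death: `[∂y] ≠ 0` in the homology of the sublevel set
strictly below `f y`. -/
def givesDeath (L : LC C) (f : C → ℝ) (y : C) : Prop :=
  y ∈ L.cells ∧ ¬ IsBdryBelow L f (f y) (col L y)

/-- The cell `y` gives birth: `[∂y] = 0` in the homology of the sublevel set
strictly below `f y`. -/
def givesBirth (L : LC C) (f : C → ℝ) (y : C) : Prop :=
  y ∈ L.cells ∧ IsBdryBelow L f (f y) (col L y)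

/-- The unique chain supported on death-giving cells below `y` whose boundary
is `∂y` (for birth-giving `y`); junk value otherwise. -/
noncomputable def canChain (L : LC C) (f : C → ℝ) (y : C) : C → ZMod 2 :=
  if h : ∃ c : C → ZMod 2,
      (∀ z, c z ≠ 0 → f z < f y ∧ givesDeath L f z) ∧ bdOp L c = col L y
  then h.choose else 0

/-- The canonical cycle `d_y = y + c_y` of a birth-giving cell `y`. -/
noncomputable def canCycle (L : LC C) (f : C → ℝ) (y : C) : C → ZMod 2 :=
  Pi.single y 1 + canChain L f y

/-- `v` and `w` are homologous in the sublevel complex strictly below `b`. -/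
def HomBelow (L : LC C) (f : C → ℝ) (b : ℝ) (v w : C → ZMod 2) : Prop :=
  ∃ c : C → ZMod 2, (∀ z, c z ≠ 0 → z ∈ L.cells ∧ f z < b) ∧ bdOp L c = v + w

/-- Sorting a finset of cells by increasing filter value (fueled recursion). -/
noncomputable def sortAux (f : C → ℝ) : ℕ → Finset C → List C
  | 0, _ => []
  | n + 1, S =>
    if h : S.Nonempty then
      let m := (Finset.exists_min_image S f h).choose
      m :: sortAux f n (S.erase m)
    else []

/-- The cells of `L` listed in increasing order of filter value. -/
noncomputable def sortedCells (L : LC C) (f : C → ℝ) : List C :=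
  sortAux f L.cells.card L.cells

/-- An element of `S` maximizing `f`, with default value. -/
noncomputable def maxCellD (f : C → ℝ) (S : Finset C) (dflt : C) : C :=
  if h : S.Nonempty then (Finset.exists_max_image S f h).choose else dflt

/-- One step of the persistence pairing algorithm: the state is the pair
(unpaired birth-giving cells, birth-death pairs found so far), and `y` is the
next cell in the filter order.  If `y` gives birth it is added to the unpaired
set; if `y` gives death, the unique subset `A` of the unpaired cells whose
canonical cycles sum to a cycle homologous to `∂y` below `y` is found, and `y`
is paired with the cell of `A` of maximal filter value. -/
noncomputable def pairStep (L : LC C) (f : C → ℝ) (st : Finset C × Finset (C × C))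
    (y : C) : Finset C × Finset (C × C) :=
  if givesBirth L f y then (insert y st.1, st.2)
  else
    let A : Finset C :=
      if h : ∃! A : Finset C, A ⊆ st.1 ∧
          HomBelow L f (f y) (∑ x ∈ A, canCycle L f x) (col L y)
      then h.exists.choose else ∅
    let s := maxCellD f A y
    (st.1.erase s, insert (s, y) st.2)

/-- The state of the persistence pairing after processing all cells. -/
noncomputable def pairState (L : LC C) (f : C → ℝ) : Finset C × Finset (C × C) :=
  (sortedCells L f).foldl (pairStep L f) (∅, ∅)

/-- The birth-death pairs `BD(f)` of the filter `f`. -/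
noncomputable def BD (L : LC C) (f : C → ℝ) : Finset (C × C) :=
  (pairState L f).2

/-- The state of the persistence pairing after processing the cells with
filter value `< b`. -/
noncomputable def stateBelow (L : LC C) (f : C → ℝ) (b : ℝ) :
    Finset C × Finset (C × C) :=
  ((sortedCells L f).filter (fun x => decide (f x < b))).foldl (pairStep L f) (∅, ∅)

/-- The birth-giving cells with value `< b` that are unpaired by the
persistence pairing restricted to the sublevel set below `b`. -/
noncomputable def unpairedBelow (L : LC C) (f : C → ℝ) (b : ℝ) : Finset C :=
  (stateBelow L f b).1

/-- `(s,t)` is a shallow pair: `s` is the facet of `t` with maximal filter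
value and `t` is the cofacet of `s` with minimal filter value. -/
def IsShallow (L : LC C) (f : C → ℝ) (s t : C) : Prop :=
  L.bd s t = 1 ∧ (∀ x, L.bd x t ≠ 0 → f x ≤ f s) ∧ (∀ y, L.bd s y ≠ 0 → f t ≤ f y)

/-- Cancel a list of pairs in sequence. -/
noncomputable def cancelList : LC C → List (C × C) → LC C
  | L, [] => L
  | L, p :: ps => cancelList (cancel L p.1 p.2) ps

/-- The quotient after canceling the first `k` pairs of the sequence `Φ`. -/
noncomputable def quotAt (L : LC C) {n : ℕ} (Φ : Fin n → C × C) (k : ℕ) : LC C :=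
  cancelList L ((List.ofFn Φ).take k)

/-- `Φ` is a shallow order: an enumeration of the birth-death pairs of `f`
such that each pair is shallow for the quotient obtained by canceling all
preceding pairs. -/
def IsShallowOrder (L : LC C) (f : C → ℝ) {n : ℕ} (Φ : Fin n → C × C) : Prop :=
  Function.Injective Φ ∧ (∀ i, Φ i ∈ BD L f) ∧
  ∀ i : Fin n, IsShallow (quotAt L Φ i) f (Φ i).1 (Φ i).2

/-- The depth poset: the intersection of the strict total orders induced on
`BD(f)` by all shallow orders. -/
def DepthRel (L : LC C) (f : C → ℝ) (φ ψ : C × C) : Prop :=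
  φ ∈ BD L f ∧ ψ ∈ BD L f ∧
  ∀ Φ : Fin (BD L f).card → C × C, IsShallowOrder L f Φ →
    ∀ i j : Fin (BD L f).card, Φ i = φ → Φ j = ψ → i < j

/-- The rank of the lower-left minor of the ordered boundary matrix with rows
the cells of filter value `≥ a` and columns the cells of filter value `≤ b`. -/
noncomputable def llRank (L : LC C) (f : C → ℝ) (a b : ℝ) : ℕ :=
  Matrix.rank (Matrix.of fun (x : {x : C // x ∈ L.cells ∧ a ≤ f x})
    (y : {y : C // y ∈ L.cells ∧ f y ≤ b}) => L.bd x.1 y.1)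

/-- `Φ` and `Ψ` differ by transposing two adjacent positions. -/
def AdjSwap {n : ℕ} (Φ Ψ : Fin n → C × C) : Prop :=
  ∃ (k : Fin n) (hk : (k : ℕ) + 1 < n),
    Ψ k = Φ ⟨k + 1, hk⟩ ∧ Ψ ⟨k + 1, hk⟩ = Φ k ∧
    ∀ i : Fin n, i ≠ k → i ≠ ⟨k + 1, hk⟩ → Ψ i = Φ i
section AuxDev
set_option linter.unusedSectionVars false
variable {C : Type} [Fintype C] [DecidableEq C]

private lemma zmod2_eq_one : ∀ a : ZMod 2, a ≠ 0 → a = 1 := by decide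

private lemma zmod2_flip : ∀ a b c : ZMod 2, a = b + c → b = a + c := by decide

private lemma zmod2_mul_ne : ∀ a b : ZMod 2, a * b ≠ 0 → a ≠ 0 ∧ b ≠ 0 := by decide

private lemma zmod2_add_ne : ∀ a b : ZMod 2, a + b ≠ 0 → a ≠ 0 ∨ b ≠ 0 := by decide

lemma LC.ext' {L M : LC C} (hc : L.cells = M.cells) (hd : L.dim = M.dim)
    (hb : L.bd = M.bd) : L = M := by
  cases L; cases M; simp_all

lemma cancel_cells {L : LC C} {s t : C} (hst : L.bd s t = 1) :
    (cancel L s t).cells = L.cells \ {s, t} := by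
  rw [cancel, dif_pos hst]

lemma cancel_bd {L : LC C} {s t : C} (hst : L.bd s t = 1) :
    (cancel L s t).bd = cancelBd L s t := by
  rw [cancel, dif_pos hst]

lemma cancel_dim {L : LC C} {s t : C} (hst : L.bd s t = 1) :
    (cancel L s t).dim = L.dim := by
  rw [cancel, dif_pos hst]

lemma cancel_bd_eq {L : LC C} {s t : C} (hst : L.bd s t = 1) {x y : C}
    (hx : x ∈ L.cells \ {s, t}) (hy : y ∈ L.cells \ {s, t}) :
    (cancel L s t).bd x y = L.bd x y + L.bd s y * L.bd x t := by
  rw [cancel_bd hst]; unfold cancelBd; rw [if_pos ⟨hx, hy⟩]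

lemma cancel_cells_subset (L : LC C) (s t : C) : (cancel L s t).cells ⊆ L.cells := by
  unfold cancel; split_ifs
  · exact Finset.sdiff_subset
  · exact fun _ h => h

lemma LC.mem_of_bd_ne_zero_left {L : LC C} {x y : C} (h : L.bd x y ≠ 0) : x ∈ L.cells :=
  (L.bd_mem x y h).1

lemma LC.mem_of_bd_ne_zero_right {L : LC C} {x y : C} (h : L.bd x y ≠ 0) : y ∈ L.cells :=
  (L.bd_mem x y h).2

lemma IsShallow.bd_one {L : LC C} {f : C → ℝ} {s t : C} (h : IsShallow L f s t) :
    L.bd s t = 1 := h.1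

lemma IsShallow.mem_left {L : LC C} {f : C → ℝ} {s t : C} (h : IsShallow L f s t) :
    s ∈ L.cells := (L.bd_mem s t (by rw [h.1]; exact one_ne_zero)).1

lemma IsShallow.mem_right {L : LC C} {f : C → ℝ} {s t : C} (h : IsShallow L f s t) :
    t ∈ L.cells := (L.bd_mem s t (by rw [h.1]; exact one_ne_zero)).2

lemma IsShallow.ne {L : LC C} {f : C → ℝ} {s t : C} (h : IsShallow L f s t) : s ≠ t := by
  intro e; subst e
  have h1 := h.1
  rw [L.bd_self] at h1
  exact zero_ne_one h1

/-- A valid shallow cancellation sequence. -/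
def ValidSeq (f : C → ℝ) : LC C → List (C × C) → Prop
  | _, [] => True
  | M, p :: ps => IsShallow M f p.1 p.2 ∧ ValidSeq f (cancel M p.1 p.2) ps

@[simp] lemma validSeq_nil (f : C → ℝ) (M : LC C) : ValidSeq f M [] := trivial

@[simp] lemma validSeq_cons {f : C → ℝ} {M : LC C} {p : C × C} {ps : List (C × C)} :
    ValidSeq f M (p :: ps) ↔ IsShallow M f p.1 p.2 ∧ ValidSeq f (cancel M p.1 p.2) ps :=
  Iff.rfl

@[simp] lemma cancelList_nil (M : LC C) : cancelList M [] = M := rfl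

@[simp] lemma cancelList_cons (M : LC C) (p : C × C) (ps : List (C × C)) :
    cancelList M (p :: ps) = cancelList (cancel M p.1 p.2) ps := rfl

lemma cancelList_append (M : LC C) (l₁ l₂ : List (C × C)) :
    cancelList M (l₁ ++ l₂) = cancelList (cancelList M l₁) l₂ := by
  induction l₁ generalizing M with
  | nil => rfl
  | cons p ps ih => simp [ih]

lemma cancelList_cells_subset (M : LC C) (l : List (C × C)) :
    (cancelList M l).cells ⊆ M.cells := by
  induction l generalizing M with
  | nil => exact fun _ h => h
  | cons p ps ih => exact fun c hc => cancel_cells_subset M p.1 p.2 (ih _ hc)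

lemma validSeq_append {f : C → ℝ} {M : LC C} {l₁ l₂ : List (C × C)} :
    ValidSeq f M (l₁ ++ l₂) ↔ ValidSeq f M l₁ ∧ ValidSeq f (cancelList M l₁) l₂ := by
  induction l₁ generalizing M with
  | nil => simp
  | cons p ps ih => simp [ih, and_assoc]

/-- The cells occurring in a list of pairs. -/
def pcells : List (C × C) → List C
  | [] => []
  | p :: ps => p.1 :: p.2 :: pcells ps

@[simp] lemma pcells_nil : pcells ([] : List (C × C)) = [] := rfl
@[simp] lemma pcells_cons (p : C × C) (ps : List (C × C)) :
    pcells (p :: ps) = p.1 :: p.2 :: pcells ps := rfl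

lemma pcells_append (l₁ l₂ : List (C × C)) :
    pcells (l₁ ++ l₂) = pcells l₁ ++ pcells l₂ := by
  induction l₁ with
  | nil => rfl
  | cons p ps ih => simp [ih]

lemma mem_pcells_iff {c : C} : ∀ {l : List (C × C)},
    c ∈ pcells l ↔ ∃ p ∈ l, c = p.1 ∨ c = p.2 := by
  intro l
  induction l with
  | nil => simp
  | cons p ps ih =>
    simp only [pcells_cons, List.mem_cons, ih]
    constructor
    · rintro (rfl | rfl | ⟨q, hq, h⟩)
      exacts [⟨p, Or.inl rfl, Or.inl rfl⟩, ⟨p, Or.inl rfl, Or.inr rfl⟩, ⟨q, Or.inr hq, h⟩]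
    · rintro ⟨q, hq, h⟩
      rcases hq with rfl | hq
      · tauto
      · exact Or.inr (Or.inr ⟨q, hq, h⟩)

lemma validSeq_facts {f : C → ℝ} : ∀ {M : LC C} {l : List (C × C)}, ValidSeq f M l →
    (pcells l).Nodup ∧ (∀ c ∈ pcells l, c ∈ M.cells) ∧
      (cancelList M l).cells = M.cells \ (pcells l).toFinset := by
  intro M l
  induction l generalizing M with
  | nil => intro _; simp
  | cons p ps ih =>
    intro ⟨hs, hv⟩
    obtain ⟨ihn, ihm, ihc⟩ := ih hv
    have hc : (cancel M p.1 p.2).cells = M.cells \ {p.1, p.2} := cancel_cells hs.bd_one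
    have hsub : ∀ c ∈ pcells ps, c ∈ M.cells \ ({p.1, p.2} : Finset C) := by
      intro c hcp; rw [← hc]; exact ihm c hcp
    have h1 : p.1 ∉ pcells ps := by
      intro h; have := hsub _ h; simp at this
    have h2 : p.2 ∉ pcells ps := by
      intro h; have := hsub _ h; simp at this
    refine ⟨?_, ?_, ?_⟩
    · simp only [pcells_cons, List.nodup_cons]
      exact ⟨by simp [hs.ne, h1], h2, ihn⟩
    · intro c hcmem
      simp only [pcells_cons, List.mem_cons] at hcmem
      rcases hcmem with rfl | rfl | h
      · exact hs.mem_left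
      · exact hs.mem_right
      · exact Finset.mem_sdiff.mp (hsub c h) |>.1
    · simp only [cancelList_cons, ihc, hc]
      ext c
      simp only [Finset.mem_sdiff, pcells_cons, List.toFinset_cons, Finset.mem_insert,
        Finset.mem_singleton, List.mem_toFinset]
      tauto

end AuxDev
section AuxDev2
set_option linter.unusedSectionVars false
variable {C : Type} [Fintype C] [DecidableEq C]

lemma shallow_cross {L : LC C} {f : C → ℝ}
    (hinj : ∀ x ∈ L.cells, ∀ y ∈ L.cells, f x = f y → x = y)
    {s t s' t' : C} (h : IsShallow L f s t) (h' : IsShallow L f s' t')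
    (hss' : s' ≠ s) : L.bd s t' * L.bd s' t = 0 := by
  by_contra hc
  obtain ⟨h1, h2⟩ := zmod2_mul_ne _ _ hc
  have e1 : f s ≤ f s' := h'.2.1 s h1
  have e2 : f s' ≤ f s := h.2.1 s' h2
  exact hss' (hinj _ h'.mem_left _ h.mem_left (le_antisymm e2 e1))

/-- Shallowness of a pair is preserved by cancellation of another shallow pair. -/
lemma shallow_preserved {L : LC C} {f : C → ℝ}
    (hinj : ∀ x ∈ L.cells, ∀ y ∈ L.cells, f x = f y → x = y)
    {s t s' t' : C} (h : IsShallow L f s t) (h' : IsShallow L f s' t')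
    (hd1 : s' ≠ s) (hd2 : s' ≠ t) (hd3 : t' ≠ s) (hd4 : t' ≠ t) :
    IsShallow (cancel L s t) f s' t' := by
  have hst := h.bd_one
  have hmem' : s' ∈ L.cells \ {s, t} := by simp [h'.mem_left, hd1, hd2]
  have hmem'' : t' ∈ L.cells \ {s, t} := by simp [h'.mem_right, hd3, hd4]
  have hcross : L.bd s t' * L.bd s' t = 0 := shallow_cross hinj h h' hd1
  refine ⟨?_, ?_, ?_⟩
  · rw [cancel_bd_eq hst hmem' hmem'', h'.bd_one, hcross, add_zero]
  · intro x hx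
    by_cases hxm : x ∈ L.cells \ {s, t}
    · rw [cancel_bd_eq hst hxm hmem''] at hx
      rcases zmod2_add_ne _ _ hx with h1 | h1
      · exact h'.2.1 x h1
      · obtain ⟨h2, h3⟩ := zmod2_mul_ne _ _ h1
        exact le_trans (h.2.1 x h3) (h'.2.1 s h2)
    · exfalso; apply hx
      rw [cancel_bd hst]; unfold cancelBd
      exact if_neg (fun hcc => hxm hcc.1)
  · intro y hy
    by_cases hym : y ∈ L.cells \ {s, t}
    · rw [cancel_bd_eq hst hmem' hym] at hy
      rcases zmod2_add_ne _ _ hy with h1 | h1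
      · exact h'.2.2 y h1
      · obtain ⟨h2, h3⟩ := zmod2_mul_ne _ _ h1
        exact le_trans (h'.2.2 t h3) (h.2.2 y h2)
    · exfalso; apply hy
      rw [cancel_bd hst]; unfold cancelBd
      exact if_neg (fun hcc => hym hcc.2)

/-- Cancellations of two disjoint shallow pairs commute. -/
lemma cancel_comm {L : LC C} {f : C → ℝ}
    (hinj : ∀ x ∈ L.cells, ∀ y ∈ L.cells, f x = f y → x = y)
    {s t s' t' : C} (h : IsShallow L f s t) (h' : IsShallow L f s' t')
    (hd1 : s' ≠ s) (hd2 : s' ≠ t) (hd3 : t' ≠ s) (hd4 : t' ≠ t) :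
    cancel (cancel L s t) s' t' = cancel (cancel L s' t') s t := by
  have hst := h.bd_one
  have hst' := h'.bd_one
  have h2 : IsShallow (cancel L s t) f s' t' :=
    shallow_preserved hinj h h' hd1 hd2 hd3 hd4
  have h2' : IsShallow (cancel L s' t') f s t :=
    shallow_preserved hinj h' h (Ne.symm hd1) (Ne.symm hd3) (Ne.symm hd2) (Ne.symm hd4)
  have hcross : L.bd s t' * L.bd s' t = 0 := shallow_cross hinj h h' hd1
  have hsetL : (cancel L s t).cells \ {s', t'} = (L.cells \ {s, t}) \ {s', t'} := by
    rw [cancel_cells hst]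
  have hsetR : (cancel L s' t').cells \ {s, t} = (L.cells \ {s, t}) \ {s', t'} := by
    rw [cancel_cells hst']; ext c; simp; tauto
  apply LC.ext'
  · rw [cancel_cells h2.bd_one, cancel_cells h2'.bd_one, cancel_cells hst, cancel_cells hst']
    ext c; simp; tauto
  · rw [cancel_dim h2.bd_one, cancel_dim h2'.bd_one, cancel_dim hst, cancel_dim hst']
  · funext x y
    rw [cancel_bd h2.bd_one, cancel_bd h2'.bd_one]
    unfold cancelBd
    rw [hsetL, hsetR]
    by_cases hc : x ∈ (L.cells \ {s, t}) \ {s', t'} ∧ y ∈ (L.cells \ {s, t}) \ {s', t'}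
    · rw [if_pos hc, if_pos hc]
      have hx1 : x ∈ L.cells \ {s, t} := (Finset.mem_sdiff.mp hc.1).1
      have hy1 : y ∈ L.cells \ {s, t} := (Finset.mem_sdiff.mp hc.2).1
      have hx2 : x ∈ L.cells \ {s', t'} := by
        have := Finset.mem_sdiff.mp hc.1; have h3 := Finset.mem_sdiff.mp this.1
        simp_all [Finset.mem_sdiff]
      have hy2 : y ∈ L.cells \ {s', t'} := by
        have := Finset.mem_sdiff.mp hc.2; have h3 := Finset.mem_sdiff.mp this.1
        simp_all [Finset.mem_sdiff]
      have hmem' : s' ∈ L.cells \ {s, t} := by simp [h'.mem_left, hd1, hd2]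
      have hmem'' : t' ∈ L.cells \ {s, t} := by simp [h'.mem_right, hd3, hd4]
      have hmemS : s ∈ L.cells \ {s', t'} := by
        simp [h.mem_left, Ne.symm hd1, Ne.symm hd3]
      have hmemT : t ∈ L.cells \ {s', t'} := by
        simp [h.mem_right, Ne.symm hd2, Ne.symm hd4]
      rw [cancel_bd_eq hst hx1 hy1, cancel_bd_eq hst hmem' hy1, cancel_bd_eq hst hx1 hmem'',
        cancel_bd_eq hst' hx2 hy2, cancel_bd_eq hst' hmemS hy2, cancel_bd_eq hst' hx2 hmemT]
      have htwo : (2 : ZMod 2) = 0 := by decide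
      linear_combination (L.bd s y * L.bd x t + L.bd s' y * L.bd x t') * hcross -
        (L.bd s' y * L.bd s' t * L.bd x t' * L.bd s t') * htwo
    · rw [if_neg hc, if_neg hc]

/-- Entries at rows above all canceled births are preserved. -/
lemma entry_transport {f : C → ℝ} : ∀ {M : LC C} {l : List (C × C)}, ValidSeq f M l →
    ∀ {x y : C}, x ∈ (cancelList M l).cells → y ∈ (cancelList M l).cells →
    (∀ q ∈ l, f q.1 < f x) → (cancelList M l).bd x y = M.bd x y := by
  intro M l
  induction l generalizing M with
  | nil => intros; rfl
  | cons p ps ih =>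
    intro hv x y hx hy hlt
    obtain ⟨hs, hv'⟩ := hv
    rw [cancelList_cons] at hx hy ⊢
    rw [ih hv' hx hy (fun q hq => hlt q (List.mem_cons_of_mem _ hq))]
    have hx' : x ∈ (cancel M p.1 p.2).cells := cancelList_cells_subset _ _ hx
    have hy' : y ∈ (cancel M p.1 p.2).cells := cancelList_cells_subset _ _ hy
    have hxm : x ∈ M.cells \ {p.1, p.2} := by rw [← cancel_cells hs.bd_one]; exact hx'
    have hym : y ∈ M.cells \ {p.1, p.2} := by rw [← cancel_cells hs.bd_one]; exact hy'
    rw [cancel_bd_eq hs.bd_one hxm hym]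
    have hz : M.bd x p.2 = 0 := by
      by_contra hn
      have e1 := hs.2.1 x hn
      have e2 := hlt p (List.mem_cons_self)
      linarith
    rw [hz, mul_zero, add_zero]

/-- Shallowness is preserved along a valid sequence of disjoint pairs. -/
lemma shallow_preserved_list {f : C → ℝ} : ∀ {M : LC C} {l : List (C × C)},
    ValidSeq f M l →
    (∀ x ∈ M.cells, ∀ y ∈ M.cells, f x = f y → x = y) →
    ∀ {s t : C}, IsShallow M f s t → s ∉ pcells l → t ∉ pcells l →
    IsShallow (cancelList M l) f s t := by
  intro M l
  induction l generalizing M with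
  | nil => intro _ _ s t h _ _; exact h
  | cons p ps ih =>
    intro hv hinj s t hst hsn htn
    obtain ⟨hs, hv'⟩ := hv
    simp only [pcells_cons, List.mem_cons, not_or] at hsn htn
    rw [cancelList_cons]
    have hinj' : ∀ x ∈ (cancel M p.1 p.2).cells, ∀ y ∈ (cancel M p.1 p.2).cells,
        f x = f y → x = y := fun x hx y hy =>
      hinj x (cancel_cells_subset M p.1 p.2 hx) y (cancel_cells_subset M p.1 p.2 hy)
    exact ih hv' hinj'
      (shallow_preserved hinj hs hst hsn.1 hsn.2.1 htn.1 htn.2.1) hsn.2.2 htn.2.2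

/-- The opposite (transposed) Lefschetz complex. -/
def LC.op (L : LC C) : LC C where
  cells := L.cells
  dim := fun c => -L.dim c
  bd := fun x y => L.bd y x
  bd_mem := fun x y h => ⟨(L.bd_mem y x h).2, (L.bd_mem y x h).1⟩
  bd_dim := fun x y h => by have := L.bd_dim y x h; show -L.dim y = -L.dim x + 1; omega
  bd_sq := fun x z => by
    have h := L.bd_sq z x
    calc ∑ y, L.bd y x * L.bd z y = ∑ y, L.bd z y * L.bd y x := by
          exact Finset.sum_congr rfl fun y _ => mul_comm _ _
      _ = 0 := h

@[simp] lemma op_cells (L : LC C) : L.op.cells = L.cells := rfl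
@[simp] lemma op_bd (L : LC C) (x y : C) : L.op.bd x y = L.bd y x := rfl
@[simp] lemma op_dim (L : LC C) (c : C) : L.op.dim c = -L.dim c := rfl

lemma op_cancel (L : LC C) (s t : C) : (cancel L s t).op = cancel L.op t s := by
  by_cases hst : L.bd s t = 1
  · have hst' : L.op.bd t s = 1 := hst
    apply LC.ext'
    · show (cancel L s t).cells = (cancel L.op t s).cells
      rw [cancel_cells hst, cancel_cells hst']
      show L.cells \ {s, t} = L.cells \ {t, s}
      rw [Finset.pair_comm]
    · funext c
      show -(cancel L s t).dim c = (cancel L.op t s).dim c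
      rw [cancel_dim hst, cancel_dim hst']; rfl
    · funext x y
      show (cancel L s t).bd y x = (cancel L.op t s).bd x y
      rw [cancel_bd hst, cancel_bd hst']
      unfold cancelBd
      have hset : L.op.cells \ {t, s} = L.cells \ {s, t} := by
        rw [op_cells, Finset.pair_comm]
      rw [hset]
      by_cases hc : x ∈ L.cells \ {s, t} ∧ y ∈ L.cells \ {s, t}
      · rw [if_pos ⟨hc.2, hc.1⟩, if_pos hc]
        show L.bd y x + L.bd s x * L.bd y t = L.op.bd x y + L.op.bd t y * L.op.bd x s
        simp [mul_comm]
      · rw [if_neg (fun h => hc ⟨h.2, h.1⟩), if_neg hc]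
  · have h1 : cancel L s t = L := by rw [cancel, dif_neg hst]
    have h2 : cancel L.op t s = L.op := by
      rw [cancel, dif_neg]; exact hst
    rw [h1, h2]

lemma op_shallow {L : LC C} {f : C → ℝ} {s t : C} (h : IsShallow L f s t) :
    IsShallow L.op (fun c => -f c) t s := by
  obtain ⟨h1, h2, h3⟩ := h
  refine ⟨h1, fun x hx => ?_, fun y hy => ?_⟩
  · simpa using h3 x hx
  · simpa using h2 y hy

lemma op_cancelList : ∀ (l : List (C × C)) (M : LC C),
    (cancelList M l).op = cancelList M.op (l.map Prod.swap) := by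
  intro l
  induction l with
  | nil => intro M; rfl
  | cons p ps ih =>
    intro M
    simp only [cancelList_cons, List.map_cons]
    rw [ih, op_cancel]
    rfl

lemma op_validSeq {f : C → ℝ} : ∀ {M : LC C} {l : List (C × C)}, ValidSeq f M l →
    ValidSeq (fun c => -f c) M.op (l.map Prod.swap) := by
  intro M l
  induction l generalizing M with
  | nil => intro _; trivial
  | cons p ps ih =>
    intro ⟨hs, hv⟩
    refine ⟨op_shallow hs, ?_⟩
    rw [← op_cancel]
    exact ih hv

end AuxDev2
section AuxDev3
set_option linter.unusedSectionVars false
variable {C : Type} [Fintype C] [DecidableEq C]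

private lemma zmod2_eq_of_add : ∀ a b : ZMod 2, a + b = 0 → a = b := by decide

lemma bd_pivot_expand {M : LC C} {u v w : C} (huv : M.bd u v = 1) :
    M.bd v w = ∑ y ∈ Finset.univ.erase v, M.bd u y * M.bd y w := by
  have hsq := M.bd_sq u w
  rw [← Finset.add_sum_erase _ _ (Finset.mem_univ v), huv, one_mul] at hsq
  exact zmod2_eq_of_add _ _ hsq

lemma bd_pivot_expand' {M : LC C} {u v w : C} (huv : M.bd u v = 1) :
    M.bd w u = ∑ y ∈ Finset.univ.erase u, M.bd w y * M.bd y v := by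
  have hsq := M.bd_sq w v
  rw [← Finset.add_sum_erase _ _ (Finset.mem_univ u), huv, mul_one] at hsq
  exact zmod2_eq_of_add _ _ hsq

lemma filter_lt_card_above {S : Finset C} {f : C → ℝ} {x y : C} (hy : y ∈ S)
    (hxy : f x < f y) :
    (S.filter fun z => f y < f z).card < (S.filter fun z => f x < f z).card := by
  refine Finset.card_lt_card ((Finset.ssubset_iff_of_subset ?_).mpr
    ⟨y, Finset.mem_filter.mpr ⟨hy, hxy⟩,
      fun hc => absurd (Finset.mem_filter.mp hc).2 (lt_irrefl _)⟩)
  intro z hz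
  rw [Finset.mem_filter] at hz ⊢
  exact ⟨hz.1, lt_trans hxy hz.2⟩

lemma filter_lt_card_below {S : Finset C} {f : C → ℝ} {x y : C} (hy : y ∈ S)
    (hxy : f y < f x) :
    (S.filter fun z => f z < f y).card < (S.filter fun z => f z < f x).card := by
  refine Finset.card_lt_card ((Finset.ssubset_iff_of_subset ?_).mpr
    ⟨y, Finset.mem_filter.mpr ⟨hy, hxy⟩,
      fun hc => absurd (Finset.mem_filter.mp hc).2 (lt_irrefl _)⟩)
  intro z hz
  rw [Finset.mem_filter] at hz ⊢
  exact ⟨hz.1, lt_trans hz.2 hxy⟩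

/-- Pulling back shallowness through the cancellation of a pair with smaller
birth value. -/
lemma shallow_pullback {M : LC C} {f : C → ℝ}
    (hinj : ∀ x ∈ M.cells, ∀ y ∈ M.cells, f x = f y → x = y)
    {p : C × C} (hp : IsShallow M f p.1 p.2)
    {s t : C} (hs : IsShallow (cancel M p.1 p.2) f s t)
    (hlt : f p.1 < f s) :
    IsShallow M f s t := by
  have hMp := hp.bd_one
  have hcells : (cancel M p.1 p.2).cells = M.cells \ {p.1, p.2} := cancel_cells hMp
  have hsmem : s ∈ M.cells \ {p.1, p.2} := by rw [← hcells]; exact hs.mem_left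
  have htmem : t ∈ M.cells \ {p.1, p.2} := by rw [← hcells]; exact hs.mem_right
  have hbsp2 : M.bd s p.2 = 0 := by
    by_contra hn
    have := hp.2.1 s hn
    linarith
  -- column cleanliness
  have col : ∀ n, ∀ x ∈ M.cells, (M.cells.filter fun z => f x < f z).card < n →
      f s < f x → M.bd x t = 0 := by
    intro n
    induction n with
    | zero => exact fun x _ h _ => absurd h (Nat.not_lt_zero _)
    | succ n ihn =>
      intro x hx hcard hfx
      by_cases hxp2 : x = p.2
      · subst hxp2
        rw [bd_pivot_expand hMp]
        refine Finset.sum_eq_zero fun y hy => ?_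
        by_cases hz : M.bd p.1 y = 0
        · rw [hz, zero_mul]
        · have hyc : y ∈ M.cells := (M.bd_mem _ _ hz).2
          have hyge : f p.2 ≤ f y := hp.2.2 y hz
          have hne : y ≠ p.2 := Finset.ne_of_mem_erase hy
          have hygt : f p.2 < f y :=
            lt_of_le_of_ne hyge (fun e => hne (hinj y hyc p.2 hp.mem_right e.symm))
          have hm := filter_lt_card_above (S := M.cells) (f := f) hyc hygt
          have := ihn y hyc (by omega) (lt_trans hfx hygt)
          rw [this, mul_zero]
      · by_cases hxp1 : x = p.1
        · exfalso; rw [hxp1] at hfx; linarith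
        · have hxm : x ∈ M.cells \ {p.1, p.2} := by simp [hx, hxp1, hxp2]
          have he : (cancel M p.1 p.2).bd x t =
              M.bd x t + M.bd p.1 t * M.bd x p.2 := cancel_bd_eq hMp hxm htmem
          have h1 : (cancel M p.1 p.2).bd x t = 0 := by
            by_contra hn
            have := hs.2.1 x hn
            linarith
          have h2 : M.bd x p.2 = 0 := by
            by_contra hn
            have := hp.2.1 x hn
            linarith
          rw [h2, mul_zero, add_zero] at he
          rw [← he]; exact h1
  -- row cleanliness
  have row : ∀ n, ∀ y ∈ M.cells, (M.cells.filter fun z => f z < f y).card < n →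
      f y < f t → M.bd s y = 0 := by
    intro n
    induction n with
    | zero => exact fun y _ h _ => absurd h (Nat.not_lt_zero _)
    | succ n ihn =>
      intro y hy hcard hfy
      by_cases hyp1 : y = p.1
      · subst hyp1
        rw [bd_pivot_expand' hMp]
        refine Finset.sum_eq_zero fun y' hy' => ?_
        by_cases hz : M.bd y' p.2 = 0
        · rw [hz, mul_zero]
        · have hyc : y' ∈ M.cells := (M.bd_mem _ _ hz).1
          have hyle : f y' ≤ f p.1 := hp.2.1 y' hz
          have hne : y' ≠ p.1 := Finset.ne_of_mem_erase hy'
          have hylt : f y' < f p.1 :=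
            lt_of_le_of_ne hyle (fun e => hne (hinj y' hyc p.1 hp.mem_left e))
          have hm := filter_lt_card_below (S := M.cells) (f := f) hyc hylt
          have := ihn y' hyc (by omega) (lt_trans hylt hfy)
          rw [this, zero_mul]
      · by_cases hyp2 : y = p.2
        · subst hyp2; exact hbsp2
        · have hym : y ∈ M.cells \ {p.1, p.2} := by simp [hy, hyp1, hyp2]
          have he : (cancel M p.1 p.2).bd s y =
              M.bd s y + M.bd p.1 y * M.bd s p.2 := cancel_bd_eq hMp hsmem hym
          have h1 : (cancel M p.1 p.2).bd s y = 0 := by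
            by_contra hn
            have := hs.2.2 y hn
            linarith
          rw [hbsp2, mul_zero, add_zero] at he
          rw [← he]; exact h1
  -- pivot
  have he : (cancel M p.1 p.2).bd s t = M.bd s t + M.bd p.1 t * M.bd s p.2 :=
    cancel_bd_eq hMp hsmem htmem
  rw [hbsp2, mul_zero, add_zero] at he
  refine ⟨by rw [← he]; exact hs.bd_one, ?_, ?_⟩
  · intro x hx
    by_contra hc
    push_neg at hc
    exact hx (col _ x (M.bd_mem _ _ hx).1 (Nat.lt_succ_self _) hc)
  · intro y hy
    by_contra hc
    push_neg at hc
    exact hy (row _ y (M.bd_mem _ _ hy).2 (Nat.lt_succ_self _) hc)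

/-- The pair of maximal birth value in a valid sequence is shallow already at
the start. -/
lemma key_lemma {f : C → ℝ} : ∀ {M : LC C} {l : List (C × C)}, ValidSeq f M l →
    (∀ x ∈ M.cells, ∀ y ∈ M.cells, f x = f y → x = y) →
    ∀ {χ : C × C}, χ ∈ l → (∀ q ∈ l, q ≠ χ → f q.1 < f χ.1) →
    IsShallow M f χ.1 χ.2 := by
  intro M l
  induction l generalizing M with
  | nil => intro _ _ _ h; exact absurd h (List.not_mem_nil)
  | cons p ps ih =>
    intro hv hinj χ hmem hmax
    obtain ⟨hs, hv'⟩ := hv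
    by_cases hpc : χ = p
    · rw [hpc]; exact hs
    · have hχps : χ ∈ ps := by
        rcases List.mem_cons.mp hmem with h | h
        · exact absurd h.symm (fun e => hpc e.symm)
        · exact h
      have hinj' : ∀ x ∈ (cancel M p.1 p.2).cells, ∀ y ∈ (cancel M p.1 p.2).cells,
          f x = f y → x = y := fun x hx y hy =>
        hinj x (cancel_cells_subset M p.1 p.2 hx) y (cancel_cells_subset M p.1 p.2 hy)
      have hχ' : IsShallow (cancel M p.1 p.2) f χ.1 χ.2 :=
        ih hv' hinj' hχps (fun q hq hne => hmax q (List.mem_cons_of_mem _ hq) hne)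
      exact shallow_pullback hinj hs hχ'
        (hmax p (List.mem_cons_self) (fun e => hpc e.symm))

/-- Moving a pair of maximal birth value to the front of a valid sequence. -/
lemma front_move {f : C → ℝ} : ∀ {M : LC C} {l : List (C × C)},
    ValidSeq f M l → (∀ x ∈ M.cells, ∀ y ∈ M.cells, f x = f y → x = y) →
    ∀ {χ : C × C}, χ ∈ l → (∀ q ∈ l, q ≠ χ → f q.1 < f χ.1) →
    ∃ l₂ : List (C × C), l.Perm (χ :: l₂) ∧ ValidSeq f M (χ :: l₂) ∧
      cancelList M (χ :: l₂) = cancelList M l := by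
  intro M l
  induction l generalizing M with
  | nil => intro _ _ _ h; exact absurd h (List.not_mem_nil)
  | cons p ps ih =>
    intro hv hinj χ hmem hmax
    have hv' := validSeq_cons.mp hv
    obtain ⟨hs, hvtail⟩ := hv'
    by_cases hpc : p = χ
    · subst hpc
      exact ⟨ps, List.Perm.refl _, hv, rfl⟩
    · have hχps : χ ∈ ps := by
        rcases List.mem_cons.mp hmem with h | h
        · exact absurd h.symm hpc
        · exact h
      have hinj' : ∀ x ∈ (cancel M p.1 p.2).cells, ∀ y ∈ (cancel M p.1 p.2).cells,
          f x = f y → x = y := fun x hx y hy =>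
        hinj x (cancel_cells_subset M p.1 p.2 hx) y (cancel_cells_subset M p.1 p.2 hy)
      have hχM : IsShallow M f χ.1 χ.2 := key_lemma hv hinj hmem hmax
      obtain ⟨l₂', hperm', v1, e1⟩ := ih hvtail hinj' hχps
        (fun q hq hne => hmax q (List.mem_cons_of_mem _ hq) hne)
      have v1' := validSeq_cons.mp v1
      -- cell disjointness between p and χ
      obtain ⟨hnd, hmemc, -⟩ := validSeq_facts (f := f) hv
      have hχ1 : χ.1 ∈ pcells ps := mem_pcells_iff.mpr ⟨χ, hχps, Or.inl rfl⟩
      have hχ2 : χ.2 ∈ pcells ps := mem_pcells_iff.mpr ⟨χ, hχps, Or.inr rfl⟩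
      simp only [pcells_cons, List.nodup_cons, List.mem_cons] at hnd
      have hd1 : p.1 ≠ χ.1 := fun e => hnd.1 (Or.inr (e ▸ hχ1))
      have hd2 : p.1 ≠ χ.2 := fun e => hnd.1 (Or.inr (e ▸ hχ2))
      have hd3 : p.2 ≠ χ.1 := fun e => hnd.2.1 (e ▸ hχ1)
      have hd4 : p.2 ≠ χ.2 := fun e => hnd.2.1 (e ▸ hχ2)
      have hswap : IsShallow (cancel M χ.1 χ.2) f p.1 p.2 :=
        shallow_preserved hinj hχM hs hd1 hd2 hd3 hd4
      have hcomm : cancel (cancel M χ.1 χ.2) p.1 p.2 = cancel (cancel M p.1 p.2) χ.1 χ.2 :=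
        cancel_comm hinj hχM hs hd1 hd2 hd3 hd4
      refine ⟨p :: l₂', ?_, ?_, ?_⟩
      · exact (hperm'.cons p).trans (List.Perm.swap χ p l₂')
      · refine validSeq_cons.mpr ⟨hχM, validSeq_cons.mpr ⟨hswap, ?_⟩⟩
        rw [hcomm]
        exact v1'.2
      · show cancelList (cancel (cancel M χ.1 χ.2) p.1 p.2) l₂' = _
        rw [hcomm]
        show cancelList (cancel M p.1 p.2) (χ :: l₂') = _
        rw [e1]
        rfl

/-- A valid sequence may be reordered into any strictly-decreasing-birth
permutation, preserving validity and the final quotient. -/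
lemma reorder {f : C → ℝ} : ∀ (n : ℕ) {M : LC C} {l l' : List (C × C)},
    l.length ≤ n → ValidSeq f M l →
    (∀ x ∈ M.cells, ∀ y ∈ M.cells, f x = f y → x = y) →
    l'.Perm l → l'.Pairwise (fun a b => f b.1 < f a.1) →
    ValidSeq f M l' ∧ cancelList M l' = cancelList M l := by
  intro n
  induction n with
  | zero =>
    intro M l l' hlen hv hinj hperm hpw
    have hl : l = [] := List.eq_nil_of_length_eq_zero (Nat.le_zero.mp hlen)
    subst hl
    have hl' : l' = [] := hperm.eq_nil
    subst hl'
    exact ⟨validSeq_nil _ _, rfl⟩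
  | succ n ihn =>
    intro M l l' hlen hv hinj hperm hpw
    cases l' with
    | nil =>
      have hl : l = [] := hperm.symm.eq_nil
      subst hl
      exact ⟨validSeq_nil _ _, rfl⟩
    | cons χ l'' =>
      have hχl : χ ∈ l := hperm.subset (List.mem_cons_self)
      have hmax : ∀ q ∈ l, q ≠ χ → f q.1 < f χ.1 := by
        intro q hq hne
        have hq' : q ∈ χ :: l'' := hperm.mem_iff.mpr hq
        rcases List.mem_cons.mp hq' with h | h
        · exact absurd h hne
        · exact (List.pairwise_cons.mp hpw).1 q h
      obtain ⟨l₂, hperm2, v1, e1⟩ := front_move hv hinj hχl hmax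
      have v1' := validSeq_cons.mp v1
      have hinj' : ∀ x ∈ (cancel M χ.1 χ.2).cells, ∀ y ∈ (cancel M χ.1 χ.2).cells,
          f x = f y → x = y := fun x hx y hy =>
        hinj x (cancel_cells_subset M χ.1 χ.2 hx) y (cancel_cells_subset M χ.1 χ.2 hy)
      have hperm'' : l''.Perm l₂ := (hperm.trans hperm2).cons_inv
      have hlen' : l₂.length ≤ n := by
        have h1 := hperm2.length_eq
        simp only [List.length_cons] at h1
        omega
      obtain ⟨v2, e2⟩ := ihn hlen' v1'.2 hinj' hperm'' (List.pairwise_cons.mp hpw).2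
      refine ⟨validSeq_cons.mpr ⟨v1'.1, v2⟩, ?_⟩
      show cancelList (cancel M χ.1 χ.2) l'' = _
      rw [e2, ← e1]
      rfl

end AuxDev3
section AuxDev4
set_option linter.unusedSectionVars false
variable {C : Type} [Fintype C] [DecidableEq C]

lemma nodup_of_pcells {l : List (C × C)} (h : (pcells l).Nodup) : l.Nodup := by
  induction l with
  | nil => exact List.nodup_nil
  | cons p ps ih =>
    simp only [pcells_cons, List.nodup_cons, List.mem_cons] at h
    refine List.nodup_cons.mpr ⟨?_, ih h.2.2⟩
    intro hp
    exact h.1 (Or.inr (mem_pcells_iff.mpr ⟨p, hp, Or.inl rfl⟩))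

lemma pcells_disjoint : ∀ {l : List (C × C)}, (pcells l).Nodup →
    ∀ {a b : C × C}, a ∈ l → b ∈ l → a ≠ b →
    a.1 ≠ b.1 ∧ a.1 ≠ b.2 ∧ a.2 ≠ b.1 ∧ a.2 ≠ b.2 := by
  intro l
  induction l with
  | nil => intro _ a b ha; exact absurd ha (List.not_mem_nil)
  | cons p ps ih =>
    intro hnd a b ha hb hab
    simp only [pcells_cons, List.nodup_cons, List.mem_cons] at hnd
    have h1 : p.1 ≠ p.2 ∧ p.1 ∉ pcells ps := by
      constructor
      · intro e; exact hnd.1 (Or.inl e)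
      · intro e; exact hnd.1 (Or.inr e)
    have h2 : p.2 ∉ pcells ps := hnd.2.1
    rcases List.mem_cons.mp ha with rfl | ha' <;> rcases List.mem_cons.mp hb with rfl | hb'
    · exact absurd rfl hab
    · have hb1 : b.1 ∈ pcells ps := mem_pcells_iff.mpr ⟨b, hb', Or.inl rfl⟩
      have hb2 : b.2 ∈ pcells ps := mem_pcells_iff.mpr ⟨b, hb', Or.inr rfl⟩
      exact ⟨fun e => h1.2 (e ▸ hb1), fun e => h1.2 (e ▸ hb2),
        fun e => h2 (e ▸ hb1), fun e => h2 (e ▸ hb2)⟩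
    · have ha1 : a.1 ∈ pcells ps := mem_pcells_iff.mpr ⟨a, ha', Or.inl rfl⟩
      have ha2 : a.2 ∈ pcells ps := mem_pcells_iff.mpr ⟨a, ha', Or.inr rfl⟩
      exact ⟨fun e => h1.2 (e ▸ ha1), fun e => h2 (e ▸ ha1),
        fun e => h1.2 (e ▸ ha2), fun e => h2 (e ▸ ha2)⟩
    · exact ih hnd.2.2 ha' hb' hab

/-- Any list of pairs with distinct birth values has a permutation that is
strictly decreasing in birth value. -/
lemma exists_sorted_perm (f : C → ℝ) (l : List (C × C)) (hnd : l.Nodup)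
    (hinj : ∀ a ∈ l, ∀ b ∈ l, f a.1 = f b.1 → a = b) :
    ∃ l' : List (C × C), l'.Perm l ∧ l'.Pairwise (fun a b => f b.1 < f a.1) := by
  classical
  let r : C × C → C × C → Prop := fun a b => f b.1 ≤ f a.1
  haveI : DecidableRel r := fun a b => Real.decidableLE _ _
  haveI : IsTotal (C × C) r := ⟨fun a b => le_total (f b.1) (f a.1)⟩
  haveI : IsTrans (C × C) r := ⟨fun a b c h1 h2 => le_trans h2 h1⟩
  refine ⟨l.insertionSort r, List.perm_insertionSort r l, ?_⟩
  have hs : (l.insertionSort r).Pairwise r := List.pairwise_insertionSort r l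
  have hnd' : (l.insertionSort r).Nodup := (List.perm_insertionSort r l).nodup_iff.mpr hnd
  have hpw := List.Pairwise.and hs hnd'
  refine hpw.imp_of_mem ?_
  intro a b ha hb hab
  have hma : a ∈ l := (List.perm_insertionSort r l).subset ha
  have hmb : b ∈ l := (List.perm_insertionSort r l).subset hb
  exact lt_of_le_of_ne hab.1 (fun e => hab.2 (hinj b hmb a hma e).symm)

/-- The main contradiction: if the boundary entry `(b_φ, d_ψ)` of the quotient
by all pairs of birth value above `f b_φ` is `1`, then no valid shallow
sequence can cancel `ψ` before `φ`. -/
lemma main_false {L : LC C} {f : C → ℝ}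
    (hinj : ∀ x ∈ L.cells, ∀ y ∈ L.cells, f x = f y → x = y)
    {T rest : List (C × C)} {ψ φ : C × C}
    (hv : ValidSeq f L (T ++ ψ :: rest)) (hφ : φ ∈ rest)
    {Apre : List (C × C)}
    (hA1 : Apre.Pairwise (fun a b => f b.1 < f a.1))
    (hA2 : ∀ χ, χ ∈ Apre ↔ (χ ∈ T ++ ψ :: rest ∧ f φ.1 < f χ.1))
    (E : (cancelList L Apre).bd φ.1 ψ.2 = 1) : False := by
  classical
  set qs := T ++ ψ :: rest with hqs
  obtain ⟨hnd, hmemc, hcellsqs⟩ := validSeq_facts hv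
  have hqsnd : qs.Nodup := nodup_of_pcells hnd
  have hψqs : ψ ∈ qs := by simp [hqs]
  have hφqs : φ ∈ qs := by simp [hqs, hφ]
  have hψrest : ψ ∉ rest := by
    have := (List.nodup_append.mp hqsnd).2.1
    exact (List.nodup_cons.mp this).1
  have hψT : ψ ∉ T := by
    have h := (List.nodup_append'.mp hqsnd).2.2
    intro hc
    exact h hc (List.mem_cons_self)
  have hψφ : ψ ≠ φ := fun e => hψrest (e ▸ hφ)
  have hφT : φ ∉ T := by
    have h := (List.nodup_append'.mp hqsnd).2.2
    intro hc
    exact h hc (List.mem_cons_of_mem _ hφ)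
  -- distinct pairs in qs have distinct birth values
  have hbirths : ∀ a ∈ qs, ∀ b ∈ qs, a ≠ b → f a.1 ≠ f b.1 := by
    intro a ha b hb hab e
    have hd := pcells_disjoint hnd ha hb hab
    have ha1 : a.1 ∈ L.cells := hmemc _ (mem_pcells_iff.mpr ⟨a, ha, Or.inl rfl⟩)
    have hb1 : b.1 ∈ L.cells := hmemc _ (mem_pcells_iff.mpr ⟨b, hb, Or.inl rfl⟩)
    exact hd.1 (hinj _ ha1 _ hb1 e)
  have hbinj : ∀ a ∈ qs, ∀ b ∈ qs, f a.1 = f b.1 → a = b := by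
    intro a ha b hb e
    by_contra hne
    exact hbirths a ha b hb hne e
  have hApre_sub : ∀ χ ∈ Apre, χ ∈ qs := fun χ hχ => ((hA2 χ).mp hχ).1
  have hApre_gt : ∀ χ ∈ Apre, f φ.1 < f χ.1 := fun χ hχ => ((hA2 χ).mp hχ).2
  have hφA : φ ∉ Apre := fun h => lt_irrefl _ (hApre_gt φ h)
  -- split the valid sequence
  have hsplit := validSeq_append.mp hv
  have hvT : ValidSeq f L T := hsplit.1
  set QT := cancelList L T with hQT
  have hvrem : ValidSeq f QT (ψ :: rest) := hsplit.2
  have hvrem' := validSeq_cons.mp hvrem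
  have hψsh : IsShallow QT f ψ.1 ψ.2 := hvrem'.1
  have hinjQT : ∀ x ∈ QT.cells, ∀ y ∈ QT.cells, f x = f y → x = y := fun x hx y hy =>
    hinj x (cancelList_cells_subset _ _ hx) y (cancelList_cells_subset _ _ hy)
  -- the split of the remaining pairs
  set pA : C × C → Bool := fun q => decide (q ∈ Apre) with hpA
  set P2 := (ψ :: rest).filter pA with hP2
  set N2 := (ψ :: rest).filter (fun q => !pA q) with hN2
  have hremnd : (ψ :: rest).Nodup := (List.nodup_append.mp hqsnd).2.1
  have hmemP2 : ∀ q, q ∈ P2 ↔ q ∈ ψ :: rest ∧ q ∈ Apre := by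
    intro q; rw [hP2, List.mem_filter]; simp [hpA]
  have hmemN2 : ∀ q, q ∈ N2 ↔ q ∈ ψ :: rest ∧ q ∉ Apre := by
    intro q; rw [hN2, List.mem_filter]; simp [hpA]
  have hsub_rem : ∀ q ∈ ψ :: rest, q ∈ qs := by
    intro q hq; rw [hqs]; exact List.mem_append_right _ hq
  obtain ⟨sP2, hsP2perm, hsP2pw⟩ := exists_sorted_perm f P2 (hremnd.filter _)
    (fun a ha b hb e => hbinj a (hsub_rem a (List.mem_of_mem_filter ha))
      b (hsub_rem b (List.mem_of_mem_filter hb)) e)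
  obtain ⟨sN2, hsN2perm, hsN2pw⟩ := exists_sorted_perm f N2 (hremnd.filter _)
    (fun a ha b hb e => hbinj a (hsub_rem a (List.mem_of_mem_filter ha))
      b (hsub_rem b (List.mem_of_mem_filter hb)) e)
  have hmemsP2 : ∀ q, q ∈ sP2 ↔ q ∈ ψ :: rest ∧ q ∈ Apre := by
    intro q; rw [hsP2perm.mem_iff]; exact hmemP2 q
  have hmemsN2 : ∀ q, q ∈ sN2 ↔ q ∈ ψ :: rest ∧ q ∉ Apre := by
    intro q; rw [hsN2perm.mem_iff]; exact hmemN2 q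
  -- not-in-Apre pairs have birth value at most f φ.1
  have hle : ∀ q ∈ qs, q ∉ Apre → f q.1 ≤ f φ.1 := by
    intro q hq hqA
    by_contra hc
    push_neg at hc
    exact hqA ((hA2 q).mpr ⟨hq, hc⟩)
  -- the sorted remaining list
  have hrempw : (sP2 ++ sN2).Pairwise (fun a b => f b.1 < f a.1) := by
    rw [List.pairwise_append]
    refine ⟨hsP2pw, hsN2pw, ?_⟩
    intro a ha b hb
    have haA := (hmemsP2 a).mp ha
    have hbA := (hmemsN2 b).mp hb
    have h1 : f b.1 ≤ f φ.1 := hle b (hsub_rem b hbA.1) hbA.2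
    have h2 : f φ.1 < f a.1 := hApre_gt a haA.2
    linarith
  have hremperm : (sP2 ++ sN2).Perm (ψ :: rest) := by
    refine List.Perm.trans (hsP2perm.append hsN2perm) ?_
    exact List.filter_append_perm pA (ψ :: rest)
  obtain ⟨vrem2, erem2⟩ := reorder (ψ :: rest).length (le_refl _) hvrem hinjQT
    hremperm hrempw
  have hvsP2 : ValidSeq f QT sP2 := (validSeq_append.mp vrem2).1
  -- ψ is not in Apre (its death cell survives in the Apre-quotient)
  have hvlTP : ValidSeq f L (T ++ sP2) := validSeq_append.mpr ⟨hvT, hvsP2⟩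
  -- target reordering: Apre first, then what remains of T
  set N3 := T.filter (fun q => !pA q) with hN3
  have hTnd : T.Nodup := (List.nodup_append.mp hqsnd).1
  have hmemN3 : ∀ q, q ∈ N3 ↔ q ∈ T ∧ q ∉ Apre := by
    intro q; rw [hN3, List.mem_filter]; simp [hpA]
  have hsub_T : ∀ q ∈ T, q ∈ qs := by
    intro q hq; rw [hqs]; exact List.mem_append_left _ hq
  obtain ⟨sN3, hsN3perm, hsN3pw⟩ := exists_sorted_perm f N3 (hTnd.filter _)
    (fun a ha b hb e => hbinj a (hsub_T a (List.mem_of_mem_filter ha))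
      b (hsub_T b (List.mem_of_mem_filter hb)) e)
  have hmemsN3 : ∀ q, q ∈ sN3 ↔ q ∈ T ∧ q ∉ Apre := by
    intro q; rw [hsN3perm.mem_iff]; exact hmemN3 q
  have hAnd : Apre.Nodup :=
    hA1.imp (fun {a b} h => fun e => by subst e; exact lt_irrefl _ h)
  have hl2pw : (Apre ++ sN3).Pairwise (fun a b => f b.1 < f a.1) := by
    rw [List.pairwise_append]
    refine ⟨hA1, hsN3pw, ?_⟩
    intro a ha b hb
    have hbA := (hmemsN3 b).mp hb
    have h1 : f b.1 ≤ f φ.1 := hle b (hsub_T b hbA.1) hbA.2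
    linarith [hApre_gt a ha]
  have hsP2nd : sP2.Nodup := (hsP2perm.nodup_iff).mpr (hremnd.filter _)
  have hsN3nd : sN3.Nodup := (hsN3perm.nodup_iff).mpr (hTnd.filter _)
  have hlTPnd : (T ++ sP2).Nodup := by
    rw [List.nodup_append']
    refine ⟨hTnd, hsP2nd, ?_⟩
    intro a haT hasP2
    exact (List.nodup_append'.mp hqsnd).2.2 haT ((hmemsP2 a).mp hasP2).1
  have hl2nd : (Apre ++ sN3).Nodup := by
    rw [List.nodup_append']
    refine ⟨hAnd, hsN3nd, ?_⟩
    intro a haA hasN3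
    exact ((hmemsN3 a).mp hasN3).2 haA
  have hl2perm : (Apre ++ sN3).Perm (T ++ sP2) := by
    rw [List.perm_ext_iff_of_nodup hl2nd hlTPnd]
    intro q
    simp only [List.mem_append]
    constructor
    · rintro (h | h)
      · have hq := hApre_sub q h
        rw [hqs] at hq
        rcases List.mem_append.mp hq with h2 | h2
        · exact Or.inl h2
        · exact Or.inr ((hmemsP2 q).mpr ⟨h2, h⟩)
      · exact Or.inl ((hmemsN3 q).mp h).1
    · rintro (h | h)
      · by_cases hqA : q ∈ Apre
        · exact Or.inl hqA
        · exact Or.inr ((hmemsN3 q).mpr ⟨h, hqA⟩)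
      · exact Or.inl ((hmemsP2 q).mp h).2
  obtain ⟨v2, e2⟩ := reorder (T ++ sP2).length (le_refl _) hvlTP hinj hl2perm hl2pw
  have hsplit2 := validSeq_append.mp v2
  have hvApre : ValidSeq f L Apre := hsplit2.1
  set MI := cancelList L Apre with hMI
  have hvN3 : ValidSeq f MI sN3 := hsplit2.2
  obtain ⟨hndA, hmemcA, hcellsA⟩ := validSeq_facts hvApre
  have hψ2MI : ψ.2 ∈ MI.cells := (MI.bd_mem φ.1 ψ.2 (by rw [E]; exact one_ne_zero)).2
  have hψA : ψ ∉ Apre := by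
    intro hc
    rw [hcellsA] at hψ2MI
    exact (Finset.mem_sdiff.mp hψ2MI).2
      (List.mem_toFinset.mpr (mem_pcells_iff.mpr ⟨ψ, hc, Or.inr rfl⟩))
  have hψlt : f ψ.1 < f φ.1 := by
    have h1 : f ψ.1 ≤ f φ.1 := hle ψ hψqs hψA
    exact lt_of_le_of_ne h1 (hbirths ψ hψqs φ hφqs hψφ)
  have hφ1L : φ.1 ∈ L.cells := hmemc _ (mem_pcells_iff.mpr ⟨φ, hφqs, Or.inl rfl⟩)
  have hφcells : ∀ q ∈ Apre ++ sN3,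
      q.1 ≠ φ.1 ∧ q.2 ≠ φ.1 ∧ q.1 ≠ ψ.2 ∧ q.2 ≠ ψ.2 := by
    intro q hq
    have hqqs : q ∈ qs ∧ q ≠ φ ∧ q ≠ ψ := by
      rcases List.mem_append.mp hq with h | h
      · exact ⟨hApre_sub q h, fun e => hφA (e ▸ h), fun e => hψA (e ▸ h)⟩
      · have hm := (hmemsN3 q).mp h
        exact ⟨hsub_T q hm.1, fun e => hφT (e ▸ hm.1), fun e => hψT (e ▸ hm.1)⟩
    have hdφ := pcells_disjoint hnd hqqs.1 hφqs hqqs.2.1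
    have hdψ := pcells_disjoint hnd hqqs.1 hψqs hqqs.2.2
    exact ⟨hdφ.1, hdφ.2.2.1, hdψ.2.1, hdψ.2.2.2⟩
  obtain ⟨hndl2, hmemcl2, hcellsl2⟩ := validSeq_facts v2
  set W := cancelList L (Apre ++ sN3) with hW
  have hφ1W : φ.1 ∈ W.cells := by
    rw [hW, hcellsl2]
    refine Finset.mem_sdiff.mpr ⟨hφ1L, ?_⟩
    intro hc
    obtain ⟨q, hq, hcq⟩ := mem_pcells_iff.mp (List.mem_toFinset.mp hc)
    have hh := hφcells q hq
    rcases hcq with e | e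
    · exact hh.1 e.symm
    · exact hh.2.1 e.symm
  have hψ2L : ψ.2 ∈ L.cells := hmemc _ (mem_pcells_iff.mpr ⟨ψ, hψqs, Or.inr rfl⟩)
  have hψ2W : ψ.2 ∈ W.cells := by
    rw [hW, hcellsl2]
    refine Finset.mem_sdiff.mpr ⟨hψ2L, ?_⟩
    intro hc
    obtain ⟨q, hq, hcq⟩ := mem_pcells_iff.mp (List.mem_toFinset.mp hc)
    have hh := hφcells q hq
    rcases hcq with e | e
    · exact hh.2.2.1 e.symm
    · exact hh.2.2.2 e.symm
  have hWsplit : W = cancelList MI sN3 := by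
    rw [hW, cancelList_append, ← hMI]
  have hEW : W.bd φ.1 ψ.2 = 1 := by
    have hlt3 : ∀ q ∈ sN3, f q.1 < f φ.1 := by
      intro q hq
      have hqm := (hmemsN3 q).mp hq
      have h1 : f q.1 ≤ f φ.1 := hle q (hsub_T q hqm.1) hqm.2
      exact lt_of_le_of_ne h1
        (hbirths q (hsub_T q hqm.1) φ hφqs (fun e => hφT (e ▸ hqm.1)))
    have ht := entry_transport hvN3 (x := φ.1) (y := ψ.2)
      (by rw [← hWsplit]; exact hφ1W) (by rw [← hWsplit]; exact hψ2W) hlt3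
    rw [hWsplit, ht, E]
  have hψ1sP2 : ψ.1 ∉ pcells sP2 := by
    intro hc
    obtain ⟨q, hq, hcq⟩ := mem_pcells_iff.mp hc
    have hqm := (hmemsP2 q).mp hq
    have hqψ : q ≠ ψ := fun e => hψA (e ▸ hqm.2)
    have hd := pcells_disjoint hnd (hsub_rem q hqm.1) hψqs hqψ
    rcases hcq with e | e
    · exact hd.1 e.symm
    · exact hd.2.2.1 e.symm
  have hψ2sP2 : ψ.2 ∉ pcells sP2 := by
    intro hc
    obtain ⟨q, hq, hcq⟩ := mem_pcells_iff.mp hc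
    have hqm := (hmemsP2 q).mp hq
    have hqψ : q ≠ ψ := fun e => hψA (e ▸ hqm.2)
    have hd := pcells_disjoint hnd (hsub_rem q hqm.1) hψqs hqψ
    rcases hcq with e | e
    · exact hd.2.1 e.symm
    · exact hd.2.2.2 e.symm
  have hψshW : IsShallow (cancelList QT sP2) f ψ.1 ψ.2 :=
    shallow_preserved_list hvsP2 hinjQT hψsh hψ1sP2 hψ2sP2
  have hQTsplit : cancelList QT sP2 = cancelList L (T ++ sP2) := by
    rw [cancelList_append, ← hQT]
  have hWe : W = cancelList L (T ++ sP2) := by rw [hW]; exact e2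
  have hfinal := hψshW.2.1 φ.1 (by rw [hQTsplit, ← hWe, hEW]; exact one_ne_zero)
  linarith

end AuxDev4
section AuxDev5
set_option linter.unusedSectionVars false
variable {C : Type} [Fintype C] [DecidableEq C]

lemma quotAt_eq (L : LC C) {n : ℕ} (Φ : Fin n → C × C) (k : ℕ) :
    quotAt L Φ k = cancelList L ((List.ofFn Φ).take k) := rfl

lemma validSeq_of_stepwise {f : C → ℝ} : ∀ {l : List (C × C)} {M : LC C},
    (∀ (k : ℕ) (hk : k < l.length),
      IsShallow (cancelList M (l.take k)) f l[k].1 l[k].2) →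
    ValidSeq f M l := by
  intro l
  induction l with
  | nil => intros; trivial
  | cons p ps ih =>
    intro M h
    refine validSeq_cons.mpr ⟨?_, ?_⟩
    · have := h 0 (by simp)
      simpa using this
    · apply ih
      intro k hk
      have := h (k + 1) (by simpa using Nat.succ_lt_succ hk)
      simpa using this

lemma validSeq_of_isShallowOrder {L : LC C} {f : C → ℝ} {n : ℕ} {Φ : Fin n → C × C}
    (h : IsShallowOrder L f Φ) : ValidSeq f L (List.ofFn Φ) := by
  apply validSeq_of_stepwise
  intro k hk
  have hk' : k < n := by simpa using hk
  have h3 := h.2.2 ⟨k, hk'⟩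
  rw [quotAt_eq] at h3
  simpa [List.getElem_ofFn] using h3

lemma enum_surj {s : Finset (C × C)} {g : Fin s.card → C × C}
    (hinj : Function.Injective g) (hmem : ∀ i, g i ∈ s) :
    ∀ χ ∈ s, ∃ i, g i = χ := by
  classical
  have himg : Finset.univ.image g ⊆ s := by
    intro χ hχ
    obtain ⟨i, _, hi⟩ := Finset.mem_image.mp hχ
    exact hi ▸ hmem i
  have hcard : s.card ≤ (Finset.univ.image g).card := by
    rw [Finset.card_image_of_injective _ hinj, Finset.card_univ, Fintype.card_fin]
  have heq := Finset.eq_of_subset_of_card_le himg hcard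
  intro χ hχ
  rw [← heq] at hχ
  obtain ⟨i, _, hi⟩ := Finset.mem_image.mp hχ
  exact ⟨i, hi⟩

lemma mem_take_ofFn {α : Type*} {n : ℕ} {g : Fin n → α} {m : ℕ} {x : α} :
    x ∈ (List.ofFn g).take m ↔ ∃ k : Fin n, (k : ℕ) < m ∧ g k = x := by
  constructor
  · intro hx
    obtain ⟨k, hk, he⟩ := List.mem_iff_getElem.mp hx
    rw [List.length_take, List.length_ofFn] at hk
    have hk1 : k < m := lt_of_lt_of_le hk (min_le_left _ _)
    have hk2 : k < n := lt_of_lt_of_le hk (min_le_right _ _)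
    refine ⟨⟨k, hk2⟩, hk1, ?_⟩
    rw [← he, List.getElem_take, List.getElem_ofFn]
  · rintro ⟨k, hk, rfl⟩
    rw [List.mem_iff_getElem]
    have h1 : (k : ℕ) < ((List.ofFn g).take m).length := by
      rw [List.length_take, List.length_ofFn]
      exact lt_min hk k.isLt
    refine ⟨k, h1, ?_⟩
    rw [List.getElem_take, List.getElem_ofFn]

end AuxDev5
/-- **Relations from book-keeping.** Let `Α` order `BD(f)` by
strictly decreasing birth value and `Ω` by strictly increasing death value.
(i) If `φ` is the next pair of `Α` after canceling a prefix of `Α` and the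
current boundary entry `∂'(b_φ, d_ψ)` is `1`, then `(φ, ψ) ∈ Depth(f)`.
(ii) If `φ` is the next pair of `Ω` after canceling a prefix of `Ω` and the
current boundary entry `∂''(b_ψ, d_φ)` is `1`, then `(φ, ψ) ∈ Depth(f)`. -/
theorem bookkeeping_relations_in_depth (L : LC C) (f : C → ℝ)
    (hf : IsFilter L f)
    (A : Fin (BD L f).card → C × C)
    (hAinj : Function.Injective A) (hAmem : ∀ i, A i ∈ BD L f)
    (hAord : ∀ i j : Fin (BD L f).card, i < j → f (A j).1 < f (A i).1)
    (O : Fin (BD L f).card → C × C)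
    (hOinj : Function.Injective O) (hOmem : ∀ i, O i ∈ BD L f)
    (hOord : ∀ i j : Fin (BD L f).card, i < j → f (O i).2 < f (O j).2)
    (φ ψ : C × C) (hφ : φ ∈ BD L f) (hψ : ψ ∈ BD L f) (hne : φ ≠ ψ) :
    (∀ i : Fin (BD L f).card, A i = φ →
      (quotAt L A (i : ℕ)).bd φ.1 ψ.2 = 1 → DepthRel L f φ ψ) ∧
    (∀ j : Fin (BD L f).card, O j = φ →
      (quotAt L O (j : ℕ)).bd ψ.1 φ.2 = 1 → DepthRel L f φ ψ) := by
  classical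
  have hinj := hf.1
  have hAsurj := enum_surj hAinj hAmem
  have hOsurj := enum_surj hOinj hOmem
  constructor
  · -- part (i)
    intro i hAi E
    refine ⟨hφ, hψ, ?_⟩
    intro Φ hΦ i' j' hi' hj'
    by_contra hcon
    have hΦinj := hΦ.1
    have hΦmem := hΦ.2.1
    have hij : j' < i' := by
      rcases lt_trichotomy i' j' with h | h | h
      · exact absurd h hcon
      · exact absurd (by rw [← hi', ← hj', h]) hne
      · exact h
    have hΦsurj := enum_surj hΦinj hΦmem
    have hv : ValidSeq f L (List.ofFn Φ) := validSeq_of_isShallowOrder hΦ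
    set qs := List.ofFn Φ with hqsdef
    have hlenqs : qs.length = (BD L f).card := List.length_ofFn
    have hjlen : (j' : ℕ) < qs.length := by rw [hlenqs]; exact j'.isLt
    have hget : qs[(j' : ℕ)] = ψ := by
      simp only [hqsdef, List.getElem_ofFn, Fin.eta]
      exact hj'
    have hsplitqs : qs = qs.take (j' : ℕ) ++ ψ :: qs.drop ((j' : ℕ) + 1) := by
      conv_lhs => rw [← List.take_append_drop (j' : ℕ) qs]
      rw [List.drop_eq_getElem_cons hjlen, hget]
    have hijn : (j' : ℕ) < (i' : ℕ) := hij
    have hφrest : φ ∈ qs.drop ((j' : ℕ) + 1) := by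
      have hilt : (i' : ℕ) < qs.length := by rw [hlenqs]; exact i'.isLt
      rw [List.mem_iff_getElem]
      have hdl : (qs.drop ((j' : ℕ) + 1)).length = qs.length - ((j' : ℕ) + 1) :=
        List.length_drop
      refine ⟨(i' : ℕ) - ((j' : ℕ) + 1), by omega, ?_⟩
      rw [List.getElem_drop]
      have hidx : (j' : ℕ) + 1 + ((i' : ℕ) - ((j' : ℕ) + 1)) = (i' : ℕ) := by omega
      simp only [hidx, hqsdef, List.getElem_ofFn, Fin.eta]
      exact hi'
    have hv' : ValidSeq f L (qs.take (j' : ℕ) ++ ψ :: qs.drop ((j' : ℕ) + 1)) := by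
      rw [← hsplitqs]; exact hv
    rw [quotAt_eq] at E
    set Apre := (List.ofFn A).take (i : ℕ) with hApredef
    have hA1 : Apre.Pairwise (fun a b => f b.1 < f a.1) := by
      rw [hApredef]
      refine List.Pairwise.sublist (List.take_sublist _ _) ?_
      rw [List.pairwise_ofFn]
      intro a b hab
      exact hAord a b hab
    have hA2 : ∀ χ, χ ∈ Apre ↔
        (χ ∈ qs.take (j' : ℕ) ++ ψ :: qs.drop ((j' : ℕ) + 1) ∧ f φ.1 < f χ.1) := by
      intro χ
      rw [← hsplitqs, hApredef]
      constructor
      · intro hχ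
        obtain ⟨k, hk, rfl⟩ := mem_take_ofFn.mp hχ
        have hord : f φ.1 < f (A k).1 := by
          rw [← hAi]; exact hAord k i hk
        obtain ⟨m, hm⟩ := hΦsurj (A k) (hAmem k)
        exact ⟨by rw [hqsdef, List.mem_ofFn]; exact ⟨m, hm⟩, hord⟩
      · rintro ⟨hχqs, hχgt⟩
        have hχBD : χ ∈ BD L f := by
          rw [hqsdef, List.mem_ofFn] at hχqs
          obtain ⟨m, rfl⟩ := hχqs
          exact hΦmem m
        obtain ⟨k, rfl⟩ := hAsurj χ hχBD
        have hki : k < i := by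
          rcases lt_trichotomy k i with h | h | h
          · exact h
          · subst h; rw [hAi] at hχgt; exact absurd hχgt (lt_irrefl _)
          · have h2 := hAord i k h
            rw [hAi] at h2
            exact absurd hχgt (not_lt.mpr (le_of_lt h2))
        exact mem_take_ofFn.mpr ⟨k, hki, rfl⟩
    exact main_false hinj hv' hφrest hA1 hA2 E
  · -- part (ii)
    intro j hOj E
    refine ⟨hφ, hψ, ?_⟩
    intro Φ hΦ i' j' hi' hj'
    by_contra hcon
    have hΦinj := hΦ.1
    have hΦmem := hΦ.2.1
    have hij : j' < i' := by
      rcases lt_trichotomy i' j' with h | h | h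
      · exact absurd h hcon
      · exact absurd (by rw [← hi', ← hj', h]) hne
      · exact h
    have hΦsurj := enum_surj hΦinj hΦmem
    have hv : ValidSeq f L (List.ofFn Φ) := validSeq_of_isShallowOrder hΦ
    set qs := List.ofFn Φ with hqsdef
    have hlenqs : qs.length = (BD L f).card := List.length_ofFn
    have hjlen : (j' : ℕ) < qs.length := by rw [hlenqs]; exact j'.isLt
    have hget : qs[(j' : ℕ)] = ψ := by
      simp only [hqsdef, List.getElem_ofFn, Fin.eta]
      exact hj'
    have hsplitqs : qs = qs.take (j' : ℕ) ++ ψ :: qs.drop ((j' : ℕ) + 1) := by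
      conv_lhs => rw [← List.take_append_drop (j' : ℕ) qs]
      rw [List.drop_eq_getElem_cons hjlen, hget]
    have hijn : (j' : ℕ) < (i' : ℕ) := hij
    have hφrest : φ ∈ qs.drop ((j' : ℕ) + 1) := by
      have hilt : (i' : ℕ) < qs.length := by rw [hlenqs]; exact i'.isLt
      rw [List.mem_iff_getElem]
      have hdl : (qs.drop ((j' : ℕ) + 1)).length = qs.length - ((j' : ℕ) + 1) :=
        List.length_drop
      refine ⟨(i' : ℕ) - ((j' : ℕ) + 1), by omega, ?_⟩
      rw [List.getElem_drop]
      have hidx : (j' : ℕ) + 1 + ((i' : ℕ) - ((j' : ℕ) + 1)) = (i' : ℕ) := by omega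
      simp only [hidx, hqsdef, List.getElem_ofFn, Fin.eta]
      exact hi'
    -- pass to the opposite complex
    set g : C → ℝ := fun c => -f c with hgdef
    have hinj' : ∀ x ∈ L.op.cells, ∀ y ∈ L.op.cells, g x = g y → x = y := by
      intro x hx y hy e
      refine hinj x hx y hy ?_
      have : -f x = -f y := e
      linarith
    have hvop : ValidSeq g L.op (qs.map Prod.swap) := op_validSeq hv
    have hsplitop : qs.map Prod.swap =
        (qs.take (j' : ℕ)).map Prod.swap ++
          Prod.swap ψ :: (qs.drop ((j' : ℕ) + 1)).map Prod.swap := by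
      conv_lhs => rw [hsplitqs]
      simp
    have hvop' : ValidSeq g L.op ((qs.take (j' : ℕ)).map Prod.swap ++
        Prod.swap ψ :: (qs.drop ((j' : ℕ) + 1)).map Prod.swap) := by
      rw [← hsplitop]; exact hvop
    have hφrest' : Prod.swap φ ∈ (qs.drop ((j' : ℕ) + 1)).map Prod.swap :=
      List.mem_map_of_mem hφrest
    set Apre := ((List.ofFn O).take (j : ℕ)).map Prod.swap with hApredef
    have hA1 : Apre.Pairwise (fun a b => g b.1 < g a.1) := by
      rw [hApredef, List.pairwise_map]
      refine List.Pairwise.sublist (List.take_sublist _ _) ?_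
      rw [List.pairwise_ofFn]
      intro a b hab
      show g (O b).2 < g (O a).2
      have := hOord a b hab
      simp only [hgdef]
      linarith
    have hA2 : ∀ χ, χ ∈ Apre ↔
        (χ ∈ (qs.take (j' : ℕ)).map Prod.swap ++
          Prod.swap ψ :: (qs.drop ((j' : ℕ) + 1)).map Prod.swap ∧
          g (Prod.swap φ).1 < g χ.1) := by
      intro χ
      rw [← hsplitop, hApredef]
      constructor
      · intro hχ
        obtain ⟨χ₀, hχ₀, rfl⟩ := List.mem_map.mp hχ
        obtain ⟨k, hk, rfl⟩ := mem_take_ofFn.mp hχ₀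
        constructor
        · obtain ⟨m, hm⟩ := hΦsurj (O k) (hOmem k)
          exact List.mem_map_of_mem (by rw [hqsdef, List.mem_ofFn]; exact ⟨m, hm⟩)
        · show g φ.2 < g (O k).2
          have h2 : f (O k).2 < f (O j).2 := hOord k j hk
          rw [hOj] at h2
          simp only [hgdef]
          linarith
      · rintro ⟨hχqs, hχgt⟩
        obtain ⟨χ₀, hχ₀qs, rfl⟩ := List.mem_map.mp hχqs
        have hχBD : χ₀ ∈ BD L f := by
          rw [hqsdef, List.mem_ofFn] at hχ₀qs
          obtain ⟨m, rfl⟩ := hχ₀qs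
          exact hΦmem m
        obtain ⟨k, rfl⟩ := hOsurj χ₀ hχBD
        have hgt : f (O k).2 < f (O j).2 := by
          have h3 : g φ.2 < g (O k).2 := hχgt
          simp only [hgdef] at h3
          rw [hOj]
          linarith
        have hkj : k < j := by
          rcases lt_trichotomy k j with h | h | h
          · exact h
          · subst h; exact absurd hgt (lt_irrefl _)
          · exact absurd hgt (not_lt.mpr (le_of_lt (hOord j k h)))
        exact List.mem_map_of_mem (mem_take_ofFn.mpr ⟨k, hkj, rfl⟩)
    have E' : (cancelList L.op Apre).bd (Prod.swap φ).1 (Prod.swap ψ).2 = 1 := by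
      rw [hApredef, ← op_cancelList]
      show (cancelList L ((List.ofFn O).take (j : ℕ))).bd ψ.1 φ.2 = 1
      rw [← quotAt_eq]
      exact E
    exact main_false hinj' hvop' hφrest' hA1 hA2 E'
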